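/- (Proposition 3, forward direction.) Fix an integer m ≥ 2 and matrices A ∈ ℂ^{n×n}, B ∈ ℂ^{n×n_u}, C ∈ ℂ^{n_y×n}, D ∈ ℂ^{n_y×n_u}, and assume the stacked matrix with block rows C A^j, 0 ≤ j ≤ m−2, has full column rank. If ξ ∈ ℂ^n and ν ∈ ℂ^{n_u} satisfy C A^j ξ + D̃_j ν = 0 for all 0 ≤ j ≤ m−1 and (I − Ã) ξ − B̃ ν = 0 (i.e., (ξ, ν) witnesses a zero of the lifted system at λ = 1), then C ξ + D ν = 0 and (I − A) ξ − B ν = 0 (i.e., the same pair witnesses a zero of the fast single-rate system P_m at λ = 1). Here Ã := A^m, B̃ := (Σ_{k=0}^{m-1} A^k) B, and D̃_j := C (Σ_{i=0}^{j-1} A^i) B + D. -/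
import Mathlib


open Matrix Finset

/-- Proposition 3, forward direction: under full column rank of the stacked
matrix with block rows `C A^j`, `0 ≤ j ≤ m−2`, a witness `(ξ, ν)` of a zero at
`λ = 1` of the lifted dual-rate system is also a witness of a zero at `λ = 1`
of the fast single-rate system `P_m = [A, B, C, D]`. -/
theorem lifted_zero_at_one_implies_fast_zero
    (n n_u n_y m : ℕ) (hm : 2 ≤ m)
    (A : Matrix (Fin n) (Fin n) ℂ) (B : Matrix (Fin n) (Fin n_u) ℂ)
    (C : Matrix (Fin n_y) (Fin n) ℂ) (D : Matrix (Fin n_y) (Fin n_u) ℂ)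
    (hO : ∀ x : Fin n → ℂ, (∀ j ≤ m - 2, (C * A ^ j).mulVec x = 0) → x = 0)
    (ξ : Fin n → ℂ) (ν : Fin n_u → ℂ)
    (hout : ∀ j ≤ m - 1,
      (C * A ^ j).mulVec ξ +
        (C * (∑ i ∈ Finset.range j, A ^ i) * B + D).mulVec ν = 0)
    (hstate : (1 - A ^ m).mulVec ξ -
        ((∑ k ∈ Finset.range m, A ^ k) * B).mulVec ν = 0) :
    C.mulVec ξ + D.mulVec ν = 0 ∧ (1 - A).mulVec ξ - B.mulVec ν = 0 := by
  constructor
  · have h0 := hout 0 (by omega)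
    simpa using h0
  · apply hO
    intro j hj
    have h1 := hout j (by omega)
    have h2 := hout (j + 1) (by omega)
    have hmul : C * A ^ j * (1 - A) = C * A ^ j - C * A ^ (j + 1) := by
      rw [Matrix.mul_sub, Matrix.mul_one, pow_succ, ← Matrix.mul_assoc]
    have hsum : C * (∑ i ∈ Finset.range (j + 1), A ^ i) * B + D
        = (C * (∑ i ∈ Finset.range j, A ^ i) * B + D) + C * A ^ j * B := by
      rw [Finset.sum_range_succ, Matrix.mul_add, Matrix.add_mul]
      abel
    rw [Matrix.mulVec_sub, Matrix.mulVec_mulVec, Matrix.mulVec_mulVec, hmul,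
      Matrix.sub_mulVec]
    rw [hsum, Matrix.add_mulVec] at h2
    have e1 := eq_neg_of_add_eq_zero_left h1
    have e2 := eq_neg_of_add_eq_zero_left h2
    rw [e1, e2]
    abel
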